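/- Let n ≥ 2, let λ : Fin n → ℝ be a probability vector listed in nonincreasing order, let 1 ≤ k ≤ n−1, and let α > 0 with α ≠ 1. Then the low-rank Rényi entropy dominates the full Rényi entropy: H_α^k(λ) ≥ H_α(λ), where H_α(λ) = (1/(1−α)) · log₂(∑_{i=1}^{n} (λ i)^α). -/
import Mathlib


open Finset in
/-- The low-rank Rényi entropy dominates the full Rényi entropy. -/
theorem lowRank_renyi_entropy_ge_renyi_entropy
    (n : ℕ) (hn : 2 ≤ n) (l : Fin n → ℝ)
    (hl0 : ∀ i, 0 ≤ l i) (hl1 : ∑ i, l i = 1)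
    (hmono : ∀ i j : Fin n, i ≤ j → l j ≤ l i)
    (k : ℕ) (hk1 : 1 ≤ k) (hkn : k ≤ n - 1)
    (α : ℝ) (hα : 0 < α) (hα1 : α ≠ 1)
    (lbar : ℝ)
    (hlbar : lbar = (1 - ∑ i ∈ univ.filter (fun i : Fin n => (i : ℕ) < k), l i)
        / ((n : ℝ) - k)) :
    (1 / (1 - α)) * Real.logb 2 (∑ i, (l i) ^ α) ≤
      (1 / (1 - α)) *
        Real.logb 2 ((∑ i ∈ univ.filter (fun i : Fin n => (i : ℕ) < k), (l i) ^ α)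
          + ((n : ℝ) - k) * lbar ^ α) := by
  have hkltn : k < n := by omega
  set κ : Fin n := ⟨k, hkltn⟩ with hκ
  have hSdef : (univ.filter (fun i : Fin n => (i : ℕ) < k)) = Finset.Iio κ := by
    ext i; simp [Fin.lt_def, hκ]
  have hTdef : (univ.filter (fun i : Fin n => ¬ (i : ℕ) < k)) = Finset.Ici κ := by
    ext i; simp [Fin.le_def, hκ, not_lt]
  have hcardT : (Finset.Ici κ).card = n - k := by
    rw [Fin.card_Ici]
  have hnk : (0:ℝ) < (n:ℝ) - k := by
    have : (k:ℝ) < n := by exact_mod_cast hkltn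
    linarith
  have hsplit : ∀ f : Fin n → ℝ,
      (∑ i ∈ univ.filter (fun i : Fin n => (i : ℕ) < k), f i)
        + ∑ i ∈ Finset.Ici κ, f i = ∑ i, f i := by
    intro f
    rw [hTdef.symm]
    exact Finset.sum_filter_add_sum_filter_not _ _ f
  have hcast : ((n - k : ℕ) : ℝ) = (n:ℝ) - k := by
    rw [Nat.cast_sub hkltn.le]
  -- lbar equals tail sum over (n - k)
  have hlbar' : lbar = (∑ i ∈ Finset.Ici κ, l i) / ((n:ℝ) - k) := by
    rw [hlbar]
    congr 1
    have := hsplit l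
    rw [hl1] at this
    linarith
  have hlbar_nonneg : 0 ≤ lbar := by
    rw [hlbar']
    exact div_nonneg (Finset.sum_nonneg fun i _ => hl0 i) hnk.le
  -- positivity of l 0
  have hl0pos : 0 < l ⟨0, by omega⟩ := by
    rcases lt_or_eq_of_le (hl0 ⟨0, by omega⟩) with h | h
    · exact h
    · exfalso
      have hall : ∀ i : Fin n, l i = 0 := fun i =>
        le_antisymm (le_trans (hmono ⟨0, by omega⟩ i (by simp [Fin.le_def])) h.symm.le) (hl0 i)
      rw [Finset.sum_congr rfl (fun i _ => hall i)] at hl1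
      simp at hl1
  have h0memS : (⟨0, by omega⟩ : Fin n) ∈ univ.filter (fun i : Fin n => (i : ℕ) < k) := by
    simp; omega
  have hApos : 0 < ∑ i ∈ univ.filter (fun i : Fin n => (i : ℕ) < k), (l i) ^ α :=
    Finset.sum_pos' (fun i _ => Real.rpow_nonneg (hl0 i) α)
      ⟨⟨0, by omega⟩, h0memS, Real.rpow_pos_of_pos hl0pos α⟩
  have hTnonneg : 0 ≤ ∑ i ∈ Finset.Ici κ, (l i) ^ α :=
    Finset.sum_nonneg fun i _ => Real.rpow_nonneg (hl0 i) α
  have hfull : ∑ i, (l i) ^ α =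
      (∑ i ∈ univ.filter (fun i : Fin n => (i : ℕ) < k), (l i) ^ α)
        + ∑ i ∈ Finset.Ici κ, (l i) ^ α := (hsplit _).symm
  have hfullpos : 0 < ∑ i, (l i) ^ α := by
    rw [hfull]; linarith
  -- Jensen setup
  have hw0 : ∀ i ∈ Finset.Ici κ, (0:ℝ) ≤ ((n:ℝ) - k)⁻¹ := fun _ _ => (inv_nonneg.mpr hnk.le)
  have hw1 : ∑ _i ∈ Finset.Ici κ, ((n:ℝ) - k)⁻¹ = 1 := by
    rw [Finset.sum_const, hcardT, nsmul_eq_mul, hcast]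
    field_simp
  have hmem : ∀ i ∈ Finset.Ici κ, l i ∈ Set.Ici (0:ℝ) := fun i _ => hl0 i
  have hbary : ∑ i ∈ Finset.Ici κ, ((n:ℝ) - k)⁻¹ • l i = lbar := by
    rw [hlbar']
    simp only [smul_eq_mul]
    rw [← Finset.mul_sum]
    field_simp
  have hRinpos : 0 < (∑ i ∈ univ.filter (fun i : Fin n => (i : ℕ) < k), (l i) ^ α)
      + ((n:ℝ) - k) * lbar ^ α := by
    have : 0 ≤ ((n:ℝ) - k) * lbar ^ α :=
      mul_nonneg hnk.le (Real.rpow_nonneg hlbar_nonneg α)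
    linarith
  rcases lt_or_gt_of_ne hα1 with hlt | hgt
  · -- α < 1 : concave, tail sum ≤ (n-k) * lbar^α, and 1/(1-α) ≥ 0
    have hjen := (Real.concaveOn_rpow hα.le hlt.le).le_map_sum hw0 hw1 hmem
    rw [hbary] at hjen
    have htail : ∑ i ∈ Finset.Ici κ, (l i) ^ α ≤ ((n:ℝ) - k) * lbar ^ α := by
      have : ∑ i ∈ Finset.Ici κ, ((n:ℝ) - k)⁻¹ • (l i) ^ α
          = ((n:ℝ) - k)⁻¹ * ∑ i ∈ Finset.Ici κ, (l i) ^ α := by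
        simp only [smul_eq_mul]; rw [← Finset.mul_sum]
      rw [this] at hjen
      have := mul_le_mul_of_nonneg_left hjen hnk.le
      rw [← mul_assoc, mul_inv_cancel₀ hnk.ne', one_mul] at this
      linarith
    have hlog : Real.logb 2 (∑ i, (l i) ^ α) ≤
        Real.logb 2 ((∑ i ∈ univ.filter (fun i : Fin n => (i : ℕ) < k), (l i) ^ α)
          + ((n:ℝ) - k) * lbar ^ α) := by
      apply Real.logb_le_logb_of_le one_lt_two hfullpos
      rw [hfull]; linarith
    have hcoef : 0 ≤ 1 / (1 - α) := by
      apply div_nonneg zero_le_one; linarith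
    exact mul_le_mul_of_nonneg_left hlog hcoef
  · -- α > 1 : convex, (n-k) * lbar^α ≤ tail sum, and 1/(1-α) ≤ 0
    have hjen := (convexOn_rpow hgt.le).map_sum_le hw0 hw1 hmem
    rw [hbary] at hjen
    have htail : ((n:ℝ) - k) * lbar ^ α ≤ ∑ i ∈ Finset.Ici κ, (l i) ^ α := by
      have heq : ∑ i ∈ Finset.Ici κ, ((n:ℝ) - k)⁻¹ • (l i) ^ α
          = ((n:ℝ) - k)⁻¹ * ∑ i ∈ Finset.Ici κ, (l i) ^ α := by
        simp only [smul_eq_mul]; rw [← Finset.mul_sum]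
      rw [heq] at hjen
      have := mul_le_mul_of_nonneg_left hjen hnk.le
      rw [← mul_assoc, mul_inv_cancel₀ hnk.ne', one_mul] at this
      linarith
    have hlog : Real.logb 2 ((∑ i ∈ univ.filter (fun i : Fin n => (i : ℕ) < k), (l i) ^ α)
          + ((n:ℝ) - k) * lbar ^ α) ≤ Real.logb 2 (∑ i, (l i) ^ α) := by
      apply Real.logb_le_logb_of_le one_lt_two hRinpos
      rw [hfull]; linarith
    have hcoef : 1 / (1 - α) ≤ 0 := by
      apply div_nonpos_of_nonneg_of_nonpos zero_le_one; linarith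
    exact mul_le_mul_of_nonpos_left hlog hcoef
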